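/- arXiv:1803.08894 — 2 statements merged into one kernel-verified Lean document; each statement's English description precedes it below -/
import Mathlib

section
/- Let V be a finite-dimensional vector space over a field with dim V = r, and let α ∈ Λ^p(V*) be nonzero, where 1 ≤ p ≤ r. If dim{v ∈ V | i_v α = 0} = r − p, then α is totally decomposable: α = α_1 ∧ ... ∧ α_p for some α_1, ..., α_p ∈ V*. -/
/-- A nonzero alternating `(p+1)`-form whose kernel `{v | i_v α = 0}` has dimension
`r - (p+1)` (where `r = dim V`) is totally decomposable: it is the wedge
`α_1 ∧ ... ∧ α_{p+1}` of `p+1` linear functionals, i.e. `α v = det (α_i (v_j))`. -/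
theorem decomposable_of_ker_dim_eq
    {K V : Type*} [Field K] [AddCommGroup V] [Module K V] [FiniteDimensional K V]
    (p : ℕ) (hp : p + 1 ≤ Module.finrank K V)
    (α : V [⋀^Fin (p + 1)]→ₗ[K] K) (hne : α ≠ 0)
    (hker : Module.finrank K (LinearMap.ker α.curryLeft) =
      Module.finrank K V - (p + 1)) :
    ∃ f : Fin (p + 1) → Module.Dual K V,
      ∀ v : Fin (p + 1) → V, α v = Matrix.det (Matrix.of fun i j => f i (v j)) := by
  classical
  set W := LinearMap.ker α.curryLeft with hW
  obtain ⟨U, hU⟩ := Submodule.exists_isCompl W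
  have hdimU : Module.finrank K U = p + 1 := by
    have h1 := Submodule.finrank_add_eq_of_isCompl hU
    omega
  let bU : Module.Basis (Fin (p + 1)) K U := Module.finBasisOfFinrankEq K U hdimU
  let bW := Module.Free.chooseBasis K W
  let b : Module.Basis (Module.Free.ChooseBasisIndex K W ⊕ Fin (p + 1)) K V :=
    (bW.prod bU).map (Submodule.prodEquivOfIsCompl W U hU)
  have hbW : ∀ k, b (Sum.inl k) ∈ W := by
    intro k
    simp only [b, Module.Basis.map_apply, Module.Basis.prod_apply]
    simp
  -- α vanishes whenever one argument lies in W
  have hvanish : ∀ (w : Fin (p + 1) → V) (j : Fin (p + 1)), w j ∈ W → α w = 0 := by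
    intro w j hj
    have key : ∀ w' : Fin (p + 1) → V, w' 0 ∈ W → α w' = 0 := by
      intro w' hw'
      have h0 : α.curryLeft (w' 0) = 0 := hw'
      have hz : α (Matrix.vecCons (w' 0) (fun i => w' i.succ)) = 0 := by
        rw [← AlternatingMap.curryLeft_apply_apply, h0]
        rfl
      have hcons : w' = Matrix.vecCons (w' 0) (fun i => w' i.succ) := by
        funext i
        refine Fin.cases rfl (fun i => rfl) i
      rw [hcons]
      exact hz
    have hswap := α.map_perm w (Equiv.swap 0 j)
    have h0 : α (w ∘ Equiv.swap 0 j) = 0 := by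
      apply key
      simpa using hj
    rw [h0] at hswap
    rcases Int.units_eq_one_or (Equiv.Perm.sign (Equiv.swap 0 j)) with hs | hs <;>
      rw [hs] at hswap <;> simpa using hswap.symm
  set c := α (fun i => b (Sum.inr i)) with hc
  set d : Fin (p + 1) → K := fun i => if i = 0 then c else 1 with hd
  set f : Fin (p + 1) → Module.Dual K V :=
    fun i => d i • b.coord (Sum.inr i) with hf
  have hfapp : ∀ i x, f i x = d i * b.coord (Sum.inr i) x := fun i x => rfl
  set β : V [⋀^Fin (p + 1)]→ₗ[K] K :=
    Matrix.detRowAlternating.compLinearMap (LinearMap.pi f) with hβ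
  have hβapp : ∀ w : Fin (p + 1) → V,
      β w = Matrix.det (Matrix.of fun i j => f j (w i)) := fun w => rfl
  have hcoord : ∀ i i' : Fin (p + 1),
      b.coord (Sum.inr i) (b (Sum.inr i')) = if i = i' then 1 else 0 := by
    intro i i'
    rcases eq_or_ne i i' with h | h
    · subst h; simp
    · simp [Module.Basis.coord_apply, Module.Basis.repr_self_apply, h, Ne.symm h]
  have hcoordW : ∀ (i : Fin (p + 1)) k, b.coord (Sum.inr i) (b (Sum.inl k)) = 0 := by
    intro i k
    simp [Module.Basis.coord_apply, Module.Basis.repr_self_apply]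
  have hfW : ∀ i k, f i (b (Sum.inl k)) = 0 := by
    intro i k
    rw [hfapp, hcoordW, mul_zero]
  have hfU : ∀ i i', f i (b (Sum.inr i')) = d i * (if i = i' then 1 else 0) := by
    intro i i'
    rw [hfapp, hcoord]
  have main : α = β := by
    apply Module.Basis.ext_alternating b
    intro v hv
    by_cases hex : ∃ j k, v j = Sum.inl k
    · obtain ⟨j, k, hjk⟩ := hex
      have hα : α (fun i => b (v i)) = 0 := by
        apply hvanish _ j
        rw [hjk]; exact hbW k
      have hβ0 : β (fun i => b (v i)) = 0 := by
        rw [hβapp]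
        apply Matrix.det_eq_zero_of_row_eq_zero j
        intro i'
        simp only [Matrix.of_apply]
        rw [hjk]
        exact hfW i' k
      rw [hα, hβ0]
    · push_neg at hex
      have hσ : ∀ j, ∃ i, v j = Sum.inr i := by
        intro j
        cases hvj : v j with
        | inl k => exact absurd hvj (hex j k)
        | inr i => exact ⟨i, rfl⟩
      choose σ hσ' using hσ
      have hσinj : Function.Injective σ := by
        intro a a' h
        apply hv
        rw [hσ' a, hσ' a', h]
      have hσbij : Function.Bijective σ := Finite.injective_iff_bijective.mp hσinj
      let e : Equiv.Perm (Fin (p + 1)) := Equiv.ofBijective σ hσbij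
      have hvcomp : (fun i => b (v i)) = (fun i => b (Sum.inr i)) ∘ e := by
        funext i
        simp [e, Equiv.ofBijective, hσ' i]
      have hα : α (fun i => b (v i)) = Equiv.Perm.sign e • c := by
        rw [hvcomp, α.map_perm]
      have hdiag : β (fun i => b (Sum.inr i)) = c := by
        rw [hβapp]
        have hm : (Matrix.of fun i j => f j (b (Sum.inr i))) = Matrix.diagonal d := by
          ext i j
          simp only [Matrix.of_apply]
          rw [hfU]
          rcases eq_or_ne i j with h | h
          · subst h; simp [Matrix.diagonal_apply_eq]
          · simp [Matrix.diagonal_apply_ne _ h, Ne.symm h]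
        rw [hm, Matrix.det_diagonal, hd]
        rw [Finset.prod_eq_single 0]
        · simp
        · intro i _ hi; simp [hi]
        · simp
      have hβval : β (fun i => b (v i)) = Equiv.Perm.sign e • c := by
        rw [hvcomp, β.map_perm, hdiag]
      rw [hα, hβval]
  refine ⟨f, fun v => ?_⟩
  rw [main, hβapp]
  rw [show (Matrix.of fun i j => f j (v i)) =
      (Matrix.of fun i j => f i (v j)).transpose from rfl]
  exact Matrix.det_transpose _
end

section
/- Let V be a vector space over a field with basis v_1, ..., v_{p+1}, and let Ω = Σ_{j=1}^{p+1} a_j · v_1 ∧ ... ∧ v̂_j ∧ ... ∧ v_{p+1} ∈ Λ^p(V) with a_1 = 1 (the hat denotes omission). Then there exist vectors θ_2, ..., θ_{p+1}, with θ_j ∈ span{v_1, v_j} and θ_j − v_j a multiple of v_1 for each j, such that Ω = θ_2 ∧ θ_3 ∧ ... ∧ θ_{p+1}. -/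
/-- An alternating map vanishes when two of its arguments are multiples of the same vector. -/
lemma alt_zero_of_two_parallel {K V W : Type*} [Field K] [AddCommGroup V] [Module K V]
    [AddCommGroup W] [Module K W] {n : ℕ} (F : V [⋀^Fin n]→ₗ[K] W)
    (v : Fin n → V) (v0 : V) {i j : Fin n} (hij : i ≠ j)
    (ci cj : K) (hi : v i = ci • v0) (hj : v j = cj • v0) : F v = 0 := by
  have h1 : v = Function.update v i (ci • v0) := by
    funext x
    rcases eq_or_ne x i with rfl | hx
    · simpa using hi
    · simp [Function.update_of_ne hx]
  have h2 : Function.update v i v0 =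
      Function.update (Function.update v i v0) j (cj • v0) := by
    funext x
    rcases eq_or_ne x j with rfl | hx
    · rw [Function.update_self, Function.update_of_ne hij.symm, hj]
    · simp [Function.update_of_ne hx]
  rw [h1, AlternatingMap.map_update_smul, h2, AlternatingMap.map_update_smul]
  have : F (Function.update (Function.update v i v0) j v0) = 0 := by
    apply F.map_eq_zero_of_eq _ _ hij
    rw [Function.update_self, Function.update_of_ne hij, Function.update_self]
  simp [this]

/-- If `Ω = Σ_j a_j v_1 ∧ ... ∧ v̂_j ∧ ... ∧ v_{p+1}` with `a_1 = 1`, then `Ω` is the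
wedge of the vectors `θ_j = v_j + c_j v_1` for suitable scalars `c_j`. -/
theorem decomposition_of_codim_one_multivector
    {K V : Type*} [Field K] [AddCommGroup V] [Module K V]
    (p : ℕ) (b : Module.Basis (Fin (p + 1)) K V) (a : Fin (p + 1) → K) (ha : a 0 = 1) :
    ∃ c : Fin p → K,
      (∑ j : Fin (p + 1),
          a j • ExteriorAlgebra.ιMulti K p (fun i => b (j.succAbove i))) =
        ExteriorAlgebra.ιMulti K p (fun i => b i.succ + c i • b 0) := by
  classical
  set F : V [⋀^Fin p]→ₗ[K] ExteriorAlgebra K V := ExteriorAlgebra.ιMulti K p with hF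
  set c : Fin p → K := fun i => (-1 : K) ^ (i : ℕ) * a i.succ with hc
  refine ⟨c, ?_⟩
  set m : Fin p → V := fun i => b i.succ with hm
  set w : Fin p → V := fun i => c i • b 0 with hw
  have hadd : (fun i => b i.succ + c i • b 0) = w + m := by
    funext i; simp [hm, hw, add_comm]
  rw [hadd]
  rw [show F (w + m) = ∑ s : Finset (Fin p), F (s.piecewise w m) from
    F.toMultilinearMap.map_add_univ w m]
  -- terms with at least two `w`-entries vanish
  have hzero : ∀ s : Finset (Fin p), 2 ≤ s.card → F (s.piecewise w m) = 0 := by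
    intro s hs
    obtain ⟨i, hi, j, hj, hij⟩ := Finset.one_lt_card.mp hs
    exact alt_zero_of_two_parallel F _ (b 0) hij (c i) (c j)
      (by simp [Finset.piecewise_eq_of_mem _ _ _ hi, hw])
      (by simp [Finset.piecewise_eq_of_mem _ _ _ hj, hw])
  -- restrict the sum to the empty set and singletons
  set T : Finset (Finset (Fin p)) :=
    insert ∅ (Finset.univ.image fun k : Fin p => {k}) with hT
  have hsub : ∑ s : Finset (Fin p), F (s.piecewise w m) =
      ∑ s ∈ T, F (s.piecewise w m) := by
    refine (Finset.sum_subset (Finset.subset_univ T) ?_).symm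
    intro s _ hsT
    apply hzero
    rcases s.eq_empty_or_nonempty with rfl | ⟨x, hx⟩
    · exact absurd (Finset.mem_insert_self _ _) hsT
    rcases eq_or_ne s {x} with rfl | hsx
    · exact absurd (Finset.mem_insert_of_mem (Finset.mem_image_of_mem _ (Finset.mem_univ x))) hsT
    · obtain ⟨y, hy, hyx⟩ : ∃ y ∈ s, y ≠ x := by
        by_contra h
        push_neg at h
        exact hsx (Finset.eq_singleton_iff_unique_mem.mpr ⟨hx, h⟩)
      exact Finset.one_lt_card.mpr ⟨x, hx, y, hy, hyx.symm⟩
  rw [hsub]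
  have hnotmem : (∅ : Finset (Fin p)) ∉ Finset.univ.image fun k : Fin p => {k} := by
    intro h
    obtain ⟨x, -, hx⟩ := Finset.mem_image.mp h
    exact Finset.singleton_ne_empty x hx
  rw [hT, Finset.sum_insert hnotmem,
    Finset.sum_image (by intro x _ y _ h; exact Finset.singleton_injective h)]
  have hemp : (∅ : Finset (Fin p)).piecewise w m = m := Finset.piecewise_empty w m
  rw [hemp]
  -- identify each term
  rw [Fin.sum_univ_succ]
  have h0 : (fun i : Fin p => b ((0 : Fin (p + 1)).succAbove i)) = m := by
    funext i; simp [hm]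
  rw [h0, ha, one_smul]
  congr 1
  refine Finset.sum_congr rfl fun k _ => ?_
  have hsing : ({k} : Finset (Fin p)).piecewise w m = Function.update m k (w k) :=
    Finset.piecewise_singleton w m k
  rw [hsing]
  -- the permuted term
  have hperm : Function.update m k (b 0) =
      (fun i : Fin p => b (k.succ.succAbove i)) ∘ ⇑(Fin.cycleRange k) := by
    funext x
    have := Fin.succAbove_cycleRange k x
    simp only [Function.comp_apply, this]
    rcases eq_or_ne x k with rfl | hx
    · simp
    · rw [Function.update_of_ne hx, Equiv.swap_apply_of_ne_of_ne (Fin.succ_ne_zero x)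
        ((Fin.succ_injective _).ne hx)]
  have hup : F (Function.update m k (w k)) = c k • F (Function.update m k (b 0)) := by
    rw [hw]; exact F.map_update_smul m k (c k) (b 0)
  rw [hup, hperm, AlternatingMap.map_perm, Fin.sign_cycleRange]
  have hsmul : ((-1 : ℤˣ) ^ (k : ℕ)) • (F fun i => b (k.succ.succAbove i)) =
      ((-1 : K) ^ (k : ℕ)) • (F fun i => b (k.succ.succAbove i)) := by
    rw [Units.smul_def, Units.val_pow_eq_pow_val, Units.val_neg, Units.val_one,
      ← Int.cast_smul_eq_zsmul K]
    norm_num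
  rw [hsmul, smul_smul]
  congr 1
  have hone : ((-1 : K) ^ (k : ℕ)) * ((-1 : K) ^ (k : ℕ)) = 1 := by
    rw [← pow_add]; exact Even.neg_one_pow ⟨k, rfl⟩
  rw [hc]
  linear_combination (-(a k.succ)) * hone
end
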